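/- Let Ã_{i,j}, B̃_{i,j} be vertices of Γ̃_n and write j = kn + r with k, r ∈ ℤ and 1 ≤ r ≤ n. Then for every h̃ ∈ MÖBIUS(τ̃_n, δ): if r > i then h̃(Ã_{i,j}), h̃(B̃_{i,j}) ∈ D_δ^{(2k−4)}, and if r ≤ i then h̃(Ã_{i,j}), h̃(B̃_{i,j}) ∈ D_δ^{(2k−5)}. -/

import Mathlib

open scoped Classical

/-! ## Common definitions: the plane `B`, honeycombs, and Möbius honeycombs.

Following Knutson–Tao "The honeycomb model of GL_n(C) tensor products I" and
Hwang "Saturation of Newell–Littlewood numbers" (arXiv:2409.00233). -/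

/-- Points of `ℝ³`, written as triples. -/
abbrev Pt : Type := ℝ × ℝ × ℝ

/-- The plane `B = {(x,y,z) ∈ ℝ³ : x + y + z = 0}`. -/
def planeB (p : Pt) : Prop := p.1 + p.2.1 + p.2.2 = 0

/-- The lattice points `B_ℤ = {(x,y,z) ∈ ℤ³ : x + y + z = 0}` of the plane `B`. -/
def latticeB (p : Pt) : Prop :=
  (∃ m : ℤ, p.1 = (m : ℝ)) ∧ (∃ m : ℤ, p.2.1 = (m : ℝ)) ∧ (∃ m : ℤ, p.2.2 = (m : ℝ)) ∧ planeB p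

/-- The two kinds of vertices of the graph `Γ_∞`: `Ã`-vertices and `B̃`-vertices. -/
inductive VK : Type
  | A | B
deriving DecidableEq

/-- Vertices `Ã_{i,j}`, `B̃_{i,j}` (for `i j : ℤ`) of the graph `Γ_∞`. -/
structure Vtx : Type where
  k : VK
  i : ℤ
  j : ℤ
deriving DecidableEq

/-- `AmbEdge t h d` holds when `(t, h)` is a directed edge of `Γ_∞` with direction
`d` under the direction map:  `(Ã_{i,j}, B̃_{i,j}) ↦ (-1,1,0)`,
`(Ã_{i,j}, B̃_{i-1,j}) ↦ (1,0,-1)`, `(Ã_{i,j}, B̃_{i-1,j-1}) ↦ (0,-1,1)`. -/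
inductive AmbEdge : Vtx → Vtx → Pt → Prop where
  | ne (i j : ℤ) : AmbEdge ⟨VK.A, i, j⟩ ⟨VK.B, i, j⟩ (-1, 1, 0)
  | sw (i j : ℤ) : AmbEdge ⟨VK.A, i, j⟩ ⟨VK.B, i - 1, j⟩ (1, 0, -1)
  | se (i j : ℤ) : AmbEdge ⟨VK.A, i, j⟩ ⟨VK.B, i - 1, j - 1⟩ (0, -1, 1)

/-! ### `GL_n` honeycombs and Littlewood–Richardson coefficients -/

/-- The vertex set of the graph `Δ_n` of the `GL_n` honeycomb tinkertoy `τ_n`: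
`Ã_{i,j}` for `1 ≤ i < j ≤ n` and `B̃_{i,j}` for `0 ≤ i < j ≤ n`. -/
def inDelta (n : ℕ) (v : Vtx) : Prop :=
  (v.k = VK.A ∧ 1 ≤ v.i ∧ v.i < v.j ∧ v.j ≤ (n : ℤ)) ∨
  (v.k = VK.B ∧ 0 ≤ v.i ∧ v.i < v.j ∧ v.j ≤ (n : ℤ))

/-- A honeycomb: a configuration of the `GL_n` honeycomb tinkertoy `τ_n`, i.e. a map
from the vertices of `Δ_n` to the plane `B` such that along every edge `e` the
difference `h(head e) - h(tail e)` is a nonnegative multiple of the direction `d(e)`.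
(We normalize such maps to vanish off `Δ_n` so that they faithfully encode maps
`V_{Δ_n} → B`.) -/
def IsHoneycomb (n : ℕ) (f : Vtx → Pt) : Prop :=
  (∀ v, inDelta n v → planeB (f v)) ∧
  (∀ t h d, AmbEdge t h d → inDelta n t → inDelta n h →
    ∃ a : ℝ, 0 ≤ a ∧ f h - f t = a • d) ∧
  (∀ v, ¬ inDelta n v → f v = 0)

/-- The Littlewood–Richardson coefficient `c^λ_{μ,ν}` (the multiplicity of `V_λ` in
`V_μ ⊗ V_ν` for polynomial `GL_n(ℂ)`-representations), realized via the
Knutson–Tao honeycomb model: the number of lattice honeycombs with boundary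
`∂h = (μ^*, ν^*, λ)`, where `μ^* = (-μ_n, …, -μ_1)` and the boundary coordinates are:
`λ_i` is the `x`-coordinate of `h(B̃_{i-1,n})`, `μ_i` the `y`-coordinate of
`h(B̃_{n-i,n-i+1})`, `ν_i` the `z`-coordinate of `h(B̃_{0,i})` (`1 ≤ i ≤ n`). -/
noncomputable def lrCoef (n : ℕ) (lam mu nu : Fin n → ℤ) : ℕ :=
  Nat.card {f : Vtx → Pt // IsHoneycomb n f ∧
    (∀ i : Fin n, (f ⟨VK.B, (i : ℤ), (n : ℤ)⟩).1 = ((-(mu i.rev) : ℤ) : ℝ)) ∧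
    (∀ i : Fin n, (f ⟨VK.B, (n : ℤ) - (i : ℤ) - 1, (n : ℤ) - (i : ℤ)⟩).2.1
      = ((-(nu i.rev) : ℤ) : ℝ)) ∧
    (∀ i : Fin n, (f ⟨VK.B, 0, (i : ℤ) + 1⟩).2.2 = ((lam i : ℤ) : ℝ)) ∧
    (∀ v, inDelta n v → latticeB (f v))}

/-- `lam ∈ Par_n`: a weakly decreasing sequence of nonnegative integers. -/
def IsPartition (n : ℕ) (lam : Fin n → ℤ) : Prop :=
  (∀ i j : Fin n, i ≤ j → lam j ≤ lam i) ∧ ∀ i, 0 ≤ lam i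

/-- The Newell–Littlewood number
`N_{λ,μ,ν} = ∑_{α,β,γ ∈ Par_n} c^λ_{β,γ} c^μ_{γ,α} c^ν_{α,β}`. -/
noncomputable def nlNum (n : ℕ) (lam mu nu : Fin n → ℤ) : ℕ :=
  ∑ᶠ (a : Fin n → ℤ), ∑ᶠ (b : Fin n → ℤ), ∑ᶠ (c : Fin n → ℤ),
    if IsPartition n a ∧ IsPartition n b ∧ IsPartition n c then
      lrCoef n lam b c * lrCoef n mu c a * lrCoef n nu a b
    else 0

/-! ### Möbius honeycombs -/

/-- The vertex set of the graph `Γ̃_n`: all `Ã_{i,j}`, `B̃_{i,j}` with `0 ≤ i ≤ n`. -/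
def inGamma (n : ℕ) (v : Vtx) : Prop := 0 ≤ v.i ∧ v.i ≤ (n : ℤ)

/-- The generating relation of the vertex equivalence `∼` on `Γ̃_n`:
`Ã_{i,j} ∼ B̃_{n-i, j-i+2n}` and `B̃_{i,j} ∼ Ã_{n-i, j-i+2n}`. -/
def vBase (n : ℕ) (v w : Vtx) : Prop :=
  (v.k = VK.A ∧ w = ⟨VK.B, (n : ℤ) - v.i, v.j - v.i + 2 * (n : ℤ)⟩) ∨
  (v.k = VK.B ∧ w = ⟨VK.A, (n : ℤ) - v.i, v.j - v.i + 2 * (n : ℤ)⟩)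

/-- The vertex equivalence relation `∼` on the vertices of `Γ̃_n`. -/
def vEquiv (n : ℕ) : Vtx → Vtx → Prop := Relation.EqvGen (vBase n)

/-- The generating relation of the equivalence `∼` on the plane `B` (parameter `δ`):
`(x,y,z) ∼ (y-2δ, x-δ, z+3δ)`. -/
def pBase (δ : ℝ) (p q : Pt) : Prop := q = (p.2.1 - 2 * δ, p.1 - δ, p.2.2 + 3 * δ)

/-- The equivalence relation `∼` on the plane `B` (parameter `δ`). -/
def pEquiv (δ : ℝ) : Pt → Pt → Prop := Relation.EqvGen (pBase δ)

/-- A Möbius honeycomb for the parameter `δ`: a configuration of the Möbius honeycomb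
tinkertoy `τ̃_n` (condition MH1), satisfying the boundary conditions (MH2) and the
equivariance condition (MH3).  (We normalize the map to vanish off `Γ̃_n` so that it
faithfully encodes a map `V_{Γ̃_n} → B`.) -/
def IsMobius (n : ℕ) (δ : ℝ) (f : Vtx → Pt) : Prop :=
  -- the image lies in the plane B
  (∀ v, inGamma n v → planeB (f v)) ∧
  -- (MH1) configuration condition
  (∀ t h d, AmbEdge t h d → inGamma n t → inGamma n h →
    ∃ a : ℝ, 0 ≤ a ∧ f h - f t = a • d) ∧
  -- (MH2) boundary conditions
  (∀ j : ℤ, 1 ≤ j → j ≤ (n : ℤ) → ∃ ξ : ℝ, 4 * δ ≤ ξ ∧ ξ ≤ 5 * δ ∧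
    f ⟨VK.A, 0, j⟩ = (-(2 * δ), 2 * δ - ξ, ξ)) ∧
  (∀ j : ℤ, (n : ℤ) + 1 ≤ j → j ≤ 2 * (n : ℤ) → ∃ ξ : ℝ, 2 * δ ≤ ξ ∧ ξ ≤ 3 * δ ∧
    f ⟨VK.A, 0, j⟩ = (-δ, δ - ξ, ξ)) ∧
  (∀ j : ℤ, 2 * (n : ℤ) + 1 ≤ j → j ≤ 3 * (n : ℤ) → ∃ ξ : ℝ, 0 ≤ ξ ∧ ξ ≤ δ ∧
    f ⟨VK.A, 0, j⟩ = (0, -ξ, ξ)) ∧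
  -- (MH3) equivariance
  (∀ v w, inGamma n v → inGamma n w → vEquiv n v w → pEquiv δ (f v) (f w)) ∧
  -- normalization off Γ̃_n
  (∀ v, ¬ inGamma n v → f v = 0)

/-- `MBdryEq n f ξ` says that the boundary `∂f` of the Möbius honeycomb `f` equals
`(ξ_1, …, ξ_{3n})`:  `ξ_j` is the `z`-coordinate of `f(Ã_{0,j})`. -/
def MBdryEq (n : ℕ) (f : Vtx → Pt) (ξ : Fin (3 * n) → ℝ) : Prop :=
  ∀ j : Fin (3 * n), (f ⟨VK.A, 0, (j : ℤ) + 1⟩).2.2 = ξ j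

/-! ### Edges of `Γ̃_n`, constant coordinates, lengths, perimeters -/

/-- The three kinds of edges of `Γ_∞` (labelled by the tail `Ã`-vertex). -/
inductive EK : Type
  | ne | sw | se
deriving DecidableEq

/-- An edge of `Γ_∞`, recorded by its kind and its tail `Ã_{i,j}`. -/
structure Edg : Type where
  k : EK
  i : ℤ
  j : ℤ
deriving DecidableEq

/-- The tail of an edge. -/
def Edg.tl (e : Edg) : Vtx := ⟨VK.A, e.i, e.j⟩

/-- The head of an edge. -/
def Edg.hd (e : Edg) : Vtx :=
  match e.k with
  | EK.ne => ⟨VK.B, e.i, e.j⟩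
  | EK.sw => ⟨VK.B, e.i - 1, e.j⟩
  | EK.se => ⟨VK.B, e.i - 1, e.j - 1⟩

/-- The direction of an edge. -/
def Edg.dir (e : Edg) : Pt :=
  match e.k with
  | EK.ne => (-1, 1, 0)
  | EK.sw => (1, 0, -1)
  | EK.se => (0, -1, 1)

/-- The edge belongs to `Γ̃_n` (both endpoints do). -/
def edgValid (n : ℕ) (e : Edg) : Prop := inGamma n e.tl ∧ inGamma n e.hd

/-- Edge equivalence `≡` on the edges of `Γ̃_n`: the endpoint pairs correspond under
the vertex equivalence `∼`, in either order.  Equivalent edges have the same image in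
the quotient graph `Γ_n`. -/
def edgEquiv (n : ℕ) (e e' : Edg) : Prop :=
  (vEquiv n e.tl e'.tl ∧ vEquiv n e.hd e'.hd) ∨
  (vEquiv n e.tl e'.hd ∧ vEquiv n e.hd e'.tl)

/-- The constant coordinate `const(f; e)` of the line containing the image of the
edge `e`: the `x`-coordinate if `d(e) = (0,-1,1)`, the `y`-coordinate if
`d(e) = (1,0,-1)`, the `z`-coordinate if `d(e) = (-1,1,0)`. -/
def constOf (f : Vtx → Pt) (e : Edg) : ℝ :=
  match e.k with
  | EK.ne => (f e.tl).2.2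
  | EK.sw => (f e.tl).2.1
  | EK.se => (f e.tl).1

/-- The length `length(f; e)` of the image of the edge `e`, in the normalized metric
`l((x,y,z), (x',y',z')) = (1/√2)·√((x-x')² + (y-y')² + (z-z')²)` on the plane `B`. -/
noncomputable def lengthOf (f : Vtx → Pt) (e : Edg) : ℝ :=
  (1 / Real.sqrt 2) *
    Real.sqrt (((f e.hd).1 - (f e.tl).1) ^ 2 + ((f e.hd).2.1 - (f e.tl).2.1) ^ 2 +
      ((f e.hd).2.2 - (f e.tl).2.2) ^ 2)

/-- The perimeter `perimeter(f; α̃_{i,j})` of the hexagon `α̃_{i,j}`: the sum of the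
lengths of its six surrounding edges. -/
noncomputable def perim (f : Vtx → Pt) (i j : ℤ) : ℝ :=
  lengthOf f ⟨EK.ne, i, j⟩ + lengthOf f ⟨EK.se, i + 1, j + 1⟩ +
    lengthOf f ⟨EK.sw, i + 1, j + 1⟩ + lengthOf f ⟨EK.ne, i, j + 1⟩ +
    lengthOf f ⟨EK.se, i, j + 1⟩ + lengthOf f ⟨EK.sw, i, j⟩

/-! ### Hexagons of `Γ_n`, weights, weighted perimeters, largest-lifts -/

/-- The index set `{(i,j) : 1 ≤ i ≤ n-1, 1 ≤ j ≤ n+i}` of the hexagons of `Γ_n`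
(a fundamental domain for the hexagons of `Γ̃_n` modulo equivalence). -/
noncomputable def hexFinset (n : ℕ) : Finset (ℤ × ℤ) :=
  ((Finset.Icc 1 ((n : ℤ) - 1)) ×ˢ (Finset.Icc 1 (2 * (n : ℤ) - 1))).filter
    (fun p => p.2 ≤ (n : ℤ) + p.1)

/-- The generating relation of hexagon equivalence: `α̃_{i,j} ∼ α̃_{n-i, j-i+2n}`. -/
def hexBase (n : ℕ) (p q : ℤ × ℤ) : Prop := q = ((n : ℤ) - p.1, p.2 - p.1 + 2 * (n : ℤ))

/-- Hexagon equivalence: hexagons of `Γ̃_n` with the same image in `Γ_n`. -/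
def hexEquiv (n : ℕ) : ℤ × ℤ → ℤ × ℤ → Prop := Relation.EqvGen (hexBase n)

/-- Two hexagons of `Γ̃_n` sharing an edge. -/
def hexNbr (p q : ℤ × ℤ) : Prop :=
  q = (p.1, p.2 + 1) ∨ q = (p.1, p.2 - 1) ∨ q = (p.1 + 1, p.2) ∨ q = (p.1 - 1, p.2) ∨
    q = (p.1 + 1, p.2 + 1) ∨ q = (p.1 - 1, p.2 - 1)

/-- The hexagon index is in the range `1 ≤ i ≤ n-1` of hexagons of `Γ̃_n`. -/
def hexInRange (n : ℕ) (p : ℤ × ℤ) : Prop := 1 ≤ p.1 ∧ p.1 ≤ (n : ℤ) - 1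

/-- Adjacency of hexagons of the quotient graph `Γ_n`:
some representatives share an edge in `Γ̃_n`. -/
def hexAdjQ (n : ℕ) (p q : ℤ × ℤ) : Prop :=
  ∃ p' q', hexInRange n p' ∧ hexInRange n q' ∧ hexEquiv n p p' ∧ hexEquiv n q q' ∧ hexNbr p' q'

/-- The weighted perimeter `wperim(f) = ∑_{α ∈ H_{Γ_n}} w(α) · perimeter(f; α̃)`. -/
noncomputable def wperimOf (n : ℕ) (w : ℤ × ℤ → ℝ) (f : Vtx → Pt) : ℝ :=
  ∑ p ∈ hexFinset n, w p * perim f p.1 p.2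

/-- A weight function on the hexagons of `Γ_n` (encoded on hexagon indices, constant
on equivalence classes) such that each value is strictly greater than one sixth of the
sum of the values at the adjacent hexagons of `Γ_n`. -/
def GoodWeight (n : ℕ) (w : ℤ × ℤ → ℝ) : Prop :=
  (∀ p q, hexEquiv n p q → w p = w q) ∧
  ∀ p ∈ hexFinset n,
    (1 / 6 : ℝ) *
        ∑ q ∈ (hexFinset n).filter (fun q => hexAdjQ n p q ∧ ¬ hexEquiv n p q), w q
      < w p

/-- `f` is a largest-lift of `ξ`:  `f ∈ MÖBIUS(τ̃_n, δ)`, `∂f = ξ`, and for some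
weight function `w` as in \eqref{eqn4.6}, `f` strictly maximizes the weighted
perimeter among Möbius honeycombs with boundary `ξ`. -/
def IsLargestLift (n : ℕ) (δ : ℝ) (ξ : Fin (3 * n) → ℝ) (f : Vtx → Pt) : Prop :=
  IsMobius n δ f ∧ MBdryEq n f ξ ∧
  ∃ w : ℤ × ℤ → ℝ, GoodWeight n w ∧
    ∀ g : Vtx → Pt, IsMobius n δ g → MBdryEq n g ξ → g ≠ f →
      wperimOf n w g < wperimOf n w f

/-- The rhombus `D_δ^{(c)} ⊆ B`:  for `c = 2k`,
`{(x,y,z) ∈ B : (k-1)δ ≤ x ≤ kδ, (k-1)δ ≤ y ≤ kδ}`, and for `c = 2k+1`,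
`{(x,y,z) ∈ B : (k-1)δ ≤ x ≤ kδ, kδ ≤ y ≤ (k+1)δ}`. -/
def Dreg (δ : ℝ) (c : ℤ) (p : Pt) : Prop :=
  planeB p ∧
  ∃ k : ℤ, (c = 2 * k ∧ ((k : ℝ) - 1) * δ ≤ p.1 ∧ p.1 ≤ (k : ℝ) * δ ∧
      ((k : ℝ) - 1) * δ ≤ p.2.1 ∧ p.2.1 ≤ (k : ℝ) * δ) ∨
    (c = 2 * k + 1 ∧ ((k : ℝ) - 1) * δ ≤ p.1 ∧ p.1 ≤ (k : ℝ) * δ ∧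
      (k : ℝ) * δ ≤ p.2.1 ∧ p.2.1 ≤ ((k : ℝ) + 1) * δ)

namespace MobiusLemma31

/-- Cancellation helper: compare integers after multiplying by `δ > 0`. -/
lemma int_le_of_mul {δ : ℝ} (hδ : 0 < δ) {a b : ℤ} (h : (a : ℝ) * δ ≤ (b : ℝ) * δ) :
    a ≤ b := by
  have := le_of_mul_le_mul_right h hδ
  exact_mod_cast this

lemma int_eq_of_mul {δ : ℝ} (hδ : 0 < δ) {a b : ℤ} (h : (a : ℝ) * δ = (b : ℝ) * δ) :
    a = b := by
  have := mul_right_cancel₀ (ne_of_gt hδ) h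
  exact_mod_cast this

/-- Characterization of the plane equivalence on the `x`,`y` coordinates:
equivalent points differ by an integer power of the gluing map `T`. -/
lemma pform {δ : ℝ} {p q : Pt} (h : pEquiv δ p q) :
    ∃ l : ℤ, (q.1 = p.1 - 3 * l * δ ∧ q.2.1 = p.2.1 - 3 * l * δ) ∨
      (q.1 = p.2.1 - (3 * l + 2) * δ ∧ q.2.1 = p.1 - (3 * l + 1) * δ) := by
  induction h with
  | rel x y hxy =>
      refine ⟨0, Or.inr ?_⟩
      rw [hxy]
      constructor <;> simp <;> ring
  | refl x => exact ⟨0, Or.inl ⟨by ring, by ring⟩⟩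
  | symm x y h ih =>
      obtain ⟨l, hl | hl⟩ := ih
      · exact ⟨-l, Or.inl ⟨by rw [hl.1]; push_cast; ring, by rw [hl.2]; push_cast; ring⟩⟩
      · refine ⟨-1 - l, Or.inr ⟨?_, ?_⟩⟩
        · rw [hl.2]; push_cast; ring
        · rw [hl.1]; push_cast; ring
  | trans x y z h1 h2 ih1 ih2 =>
      obtain ⟨l1, hl1 | hl1⟩ := ih1 <;> obtain ⟨l2, hl2 | hl2⟩ := ih2
      · exact ⟨l1 + l2, Or.inl ⟨by rw [hl2.1, hl1.1]; push_cast; ring,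
          by rw [hl2.2, hl1.2]; push_cast; ring⟩⟩
      · exact ⟨l1 + l2, Or.inr ⟨by rw [hl2.1, hl1.2]; push_cast; ring,
          by rw [hl2.2, hl1.1]; push_cast; ring⟩⟩
      · exact ⟨l1 + l2, Or.inr ⟨by rw [hl2.1, hl1.1]; push_cast; ring,
          by rw [hl2.2, hl1.2]; push_cast; ring⟩⟩
      · exact ⟨l1 + l2 + 1, Or.inl ⟨by rw [hl2.1, hl1.2]; push_cast; ring,
          by rw [hl2.2, hl1.1]; push_cast; ring⟩⟩

section Pins

variable {δ : ℝ} (hδ : 0 < δ)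

/-- The shape of the `T`-power relation on the (x,y)-coordinates. -/
def TRel (δ : ℝ) (px py qx qy : ℝ) : Prop :=
  ∃ l : ℤ, (qx = px - 3 * l * δ ∧ qy = py - 3 * l * δ) ∨
    (qx = py - (3 * l + 2) * δ ∧ qy = px - (3 * l + 1) * δ)

include hδ

/-- Pin a type-B pair `(W_s, R_{s+n})`: knowing `R_{s+n}` exactly (block `k+1`) and
one-sided bounds on `W_s`, the power is forced to be `1`. -/
lemma pin1 {k : ℤ} {rx ry wx wy : ℝ}
    (hrx : rx = ((k : ℝ) - 1) * δ)
    (hry1 : ((k : ℝ) - 2) * δ ≤ ry) (hry2 : ry ≤ ((k : ℝ) - 1) * δ)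
    (hwx : wx ≤ ((k : ℝ) - 2) * δ) (hwy : ((k : ℝ) - 3) * δ ≤ wy)
    (hpe : TRel δ rx ry wx wy) :
    wx = ry - 2 * δ ∧ wy = rx - δ := by
  obtain ⟨l, ⟨h1, h2⟩ | ⟨h1, h2⟩⟩ := hpe
  · exfalso
    have e1 : (1 : ℤ) ≤ 3 * l := int_le_of_mul hδ (by push_cast; nlinarith)
    have e2 : (3 * l : ℤ) ≤ 2 := int_le_of_mul hδ (by push_cast; nlinarith)
    omega
  · have e1 : (-2 : ℤ) ≤ 3 * l := int_le_of_mul hδ (by push_cast; nlinarith)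
    have e2 : (3 * l : ℤ) ≤ 1 := int_le_of_mul hδ (by push_cast; nlinarith)
    have : l = 0 := by omega
    subst this
    constructor
    · rw [h1]; push_cast; ring
    · rw [h2]; push_cast; ring

/-- Pin a forward type-A pair `(R_{s-2n}, W_s)` (block of `s` is `k`):
either the honest power `-1`, or the borderline `0`. -/
lemma pin3 {k : ℤ} {x0 y0 wx wy : ℝ}
    (hx0 : x0 = ((k : ℝ) - 4) * δ)
    (hy01 : ((k : ℝ) - 5) * δ ≤ y0) (hy02 : y0 ≤ ((k : ℝ) - 4) * δ)
    (hwx : wx ≤ ((k : ℝ) - 2) * δ) (hwy : ((k : ℝ) - 4) * δ ≤ wy)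
    (hpe : TRel δ x0 y0 wx wy) :
    (wx = y0 + δ ∧ wy = x0 + 2 * δ) ∨ (wx = x0 ∧ wy = y0) := by
  obtain ⟨l, ⟨h1, h2⟩ | ⟨h1, h2⟩⟩ := hpe
  · have e1 : (-2 : ℤ) ≤ 3 * l := int_le_of_mul hδ (by push_cast; nlinarith)
    have e2 : (3 * l : ℤ) ≤ 0 := int_le_of_mul hδ (by push_cast; nlinarith)
    have : l = 0 := by omega
    subst this
    right
    constructor
    · rw [h1]; push_cast; ring
    · rw [h2]; push_cast; ring
  · have e1 : (-5 : ℤ) ≤ 3 * l := int_le_of_mul hδ (by push_cast; nlinarith)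
    have e2 : (3 * l : ℤ) ≤ -1 := int_le_of_mul hδ (by push_cast; nlinarith)
    have : l = -1 := by omega
    subst this
    left
    constructor
    · rw [h1]; push_cast; ring
    · rw [h2]; push_cast; ring

/-- Eliminate the borderline case `B1` of `pin3`: no possible position for `R_s`. -/
lemma pin2 {k : ℤ} {xw yw rx ry : ℝ}
    (hxw1 : ((k : ℝ) - 5) * δ ≤ xw) (hxw2 : xw ≤ ((k : ℝ) - 4) * δ)
    (hyw : yw = ((k : ℝ) - 3) * δ)
    (hrx : ((k : ℝ) - 4) * δ ≤ rx) (hry : ry ≤ ((k : ℝ) - 4) * δ)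
    (hpe : TRel δ xw yw rx ry) : False := by
  obtain ⟨l, ⟨h1, h2⟩ | ⟨h1, h2⟩⟩ := hpe
  · have e1 : (1 : ℤ) ≤ 3 * l := int_le_of_mul hδ (by push_cast; nlinarith)
    have e2 : (3 * l : ℤ) ≤ 0 := int_le_of_mul hδ (by push_cast; nlinarith)
    omega
  · have e1 : (3 * l : ℤ) ≤ -1 := int_le_of_mul hδ (by push_cast; nlinarith)
    have e2 : (-2 : ℤ) ≤ 3 * l := int_le_of_mul hδ (by push_cast; nlinarith)
    omega

/-- Pin a forward type-B pair `(W_{s-n}, R_s)` (block of `s` is `k`):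
either the honest power `-1`, or the borderline `0`. -/
lemma pin4 {k : ℤ} {xw yw rx ry : ℝ}
    (hxw1 : ((k : ℝ) - 5) * δ ≤ xw) (hxw2 : xw ≤ ((k : ℝ) - 4) * δ)
    (hyw : yw = ((k : ℝ) - 3) * δ)
    (hrx : ((k : ℝ) - 4) * δ ≤ rx) (hry : ry ≤ ((k : ℝ) - 2) * δ)
    (hpe : TRel δ xw yw rx ry) :
    (rx = yw + δ ∧ ry = xw + 2 * δ) ∨ (rx = xw ∧ ry = yw) := by
  obtain ⟨l, ⟨h1, h2⟩ | ⟨h1, h2⟩⟩ := hpe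
  · have e1 : (3 * l : ℤ) ≤ 0 := int_le_of_mul hδ (by push_cast; nlinarith)
    have e2 : (-1 : ℤ) ≤ 3 * l := int_le_of_mul hδ (by push_cast; nlinarith)
    have : l = 0 := by omega
    subst this
    right
    exact ⟨by rw [h1]; push_cast; ring, by rw [h2]; push_cast; ring⟩
  · have e1 : (3 * l : ℤ) ≤ -1 := int_le_of_mul hδ (by push_cast; nlinarith)
    have e2 : (-4 : ℤ) ≤ 3 * l := int_le_of_mul hδ (by push_cast; nlinarith)
    have : l = -1 := by omega
    subst this
    left
    exact ⟨by rw [h1]; push_cast; ring, by rw [h2]; push_cast; ring⟩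

/-- Eliminate the borderline case `B2` of `pin4`: there is no possible position
for the top vertex `W_{s+n}`. -/
lemma pin5 {k : ℤ} {x0 y0 wx wy : ℝ}
    (hx0 : x0 = ((k : ℝ) - 3) * δ)
    (hy01 : ((k : ℝ) - 4) * δ ≤ y0) (hy02 : y0 ≤ ((k : ℝ) - 3) * δ)
    (hwx : wx ≤ ((k : ℝ) - 4) * δ) (hwy : ((k : ℝ) - 3) * δ ≤ wy)
    (hpe : TRel δ x0 y0 wx wy) : False := by
  obtain ⟨l, ⟨h1, h2⟩ | ⟨h1, h2⟩⟩ := hpe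
  · have e1 : (1 : ℤ) ≤ 3 * l := int_le_of_mul hδ (by push_cast; nlinarith)
    have e2 : (3 * l : ℤ) ≤ 0 := int_le_of_mul hδ (by push_cast; nlinarith)
    omega
  · have e1 : (-2 : ℤ) ≤ 3 * l := int_le_of_mul hδ (by push_cast; nlinarith)
    have e2 : (3 * l : ℤ) ≤ -1 := int_le_of_mul hδ (by push_cast; nlinarith)
    omega

/-- Pin a backward type-A pair `(R_s, W_{s+2n})` (block of `s` is `k`): power `1`. -/
lemma pin6 {k : ℤ} {a b wx wy rx ry : ℝ}
    (ha1 : (k : ℝ) * δ ≤ a) (ha2 : a ≤ ((k : ℝ) + 1) * δ)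
    (hb1 : ((k : ℝ) - 1) * δ ≤ b) (hb2 : b ≤ (k : ℝ) * δ)
    (hwx : wx = a - 2 * δ) (hwy : wy = (k : ℝ) * δ)
    (hrx : b - 2 * δ ≤ rx) (hry : ry ≤ ((k : ℝ) - 1) * δ)
    (hpe : TRel δ wx wy rx ry) :
    rx = wy - 2 * δ ∧ ry = wx - δ := by
  obtain ⟨l, ⟨h1, h2⟩ | ⟨h1, h2⟩⟩ := hpe
  · exfalso
    have e1 : (3 * l : ℤ) ≤ 2 := int_le_of_mul hδ (by push_cast; nlinarith)
    have e2 : (1 : ℤ) ≤ 3 * l := int_le_of_mul hδ (by push_cast; nlinarith)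
    omega
  · have e1 : (3 * l : ℤ) ≤ 1 := int_le_of_mul hδ (by push_cast; nlinarith)
    have e2 : (-2 : ℤ) ≤ 3 * l := int_le_of_mul hδ (by push_cast; nlinarith)
    have : l = 0 := by omega
    subst this
    exact ⟨by rw [h1]; push_cast; ring, by rw [h2]; push_cast; ring⟩

/-- Transfer lemma: the pair `(P_{m-n}, Q_m)` is related by the power `-1`,
читая off the `x+y` sums. -/
lemma pin7 {px py qx qy : ℝ}
    (hsum : qx + qy = px + py + 3 * δ)
    (hpe : TRel δ px py qx qy) :
    qx = py + δ ∧ qy = px + 2 * δ := by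
  obtain ⟨l, ⟨h1, h2⟩ | ⟨h1, h2⟩⟩ := hpe
  · exfalso
    have : (-2 * l : ℤ) = 1 := int_eq_of_mul hδ (by push_cast; nlinarith)
    omega
  · have : (-2 * l - 1 : ℤ) = 1 := int_eq_of_mul hδ (by push_cast; nlinarith)
    have hl : l = -1 := by omega
    subst hl
    exact ⟨by rw [h1]; push_cast; ring, by rw [h2]; push_cast; ring⟩

end Pins

end MobiusLemma31
namespace MobiusLemma31

/-- Coordinates of the `A`-vertices. -/
def Ax (f : Vtx → Pt) (i j : ℤ) : ℝ := (f ⟨VK.A, i, j⟩).1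
def Ay (f : Vtx → Pt) (i j : ℤ) : ℝ := (f ⟨VK.A, i, j⟩).2.1
def Bx (f : Vtx → Pt) (i j : ℤ) : ℝ := (f ⟨VK.B, i, j⟩).1
def By (f : Vtx → Pt) (i j : ℤ) : ℝ := (f ⟨VK.B, i, j⟩).2.1

section Graph

variable {n : ℕ} {δ : ℝ} {f : Vtx → Pt} (hf : IsMobius n δ f)

include hf

lemma edge_ne {i : ℤ} (h0 : 0 ≤ i) (h1 : i ≤ (n : ℤ)) (j : ℤ) :
    Bx f i j ≤ Ax f i j ∧ Bx f i j + By f i j = Ax f i j + Ay f i j := by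
  obtain ⟨a, ha, heq⟩ := hf.2.1 _ _ _ (AmbEdge.ne i j) ⟨h0, h1⟩ ⟨h0, h1⟩
  have hx := congrArg Prod.fst heq
  have hy := congrArg (fun p : Pt => p.2.1) heq
  simp only [Prod.fst_sub, Prod.smul_fst, smul_eq_mul] at hx
  simp only [Prod.snd_sub, Prod.fst_sub, Prod.smul_snd, Prod.smul_fst, smul_eq_mul] at hy
  unfold Ax Ay Bx By
  constructor
  · nlinarith [hx]
  · nlinarith [hx, hy]

lemma edge_sw {i : ℤ} (h0 : 1 ≤ i) (h1 : i ≤ (n : ℤ)) (j : ℤ) :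
    Ax f i j ≤ Bx f (i - 1) j ∧ By f (i - 1) j = Ay f i j := by
  obtain ⟨a, ha, heq⟩ := hf.2.1 _ _ _ (AmbEdge.sw i j)
    ⟨show (0:ℤ) ≤ i by omega, h1⟩
    ⟨show (0:ℤ) ≤ i - 1 by omega, show i - 1 ≤ (n:ℤ) by omega⟩
  have hx := congrArg Prod.fst heq
  have hy := congrArg (fun p : Pt => p.2.1) heq
  simp only [Prod.fst_sub, Prod.smul_fst, smul_eq_mul] at hx
  simp only [Prod.snd_sub, Prod.fst_sub, Prod.smul_snd, Prod.smul_fst, smul_eq_mul] at hy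
  unfold Ax Ay Bx By
  constructor
  · nlinarith [hx]
  · nlinarith [hy]

lemma edge_se {i : ℤ} (h0 : 1 ≤ i) (h1 : i ≤ (n : ℤ)) (j : ℤ) :
    Bx f (i - 1) (j - 1) = Ax f i j ∧ By f (i - 1) (j - 1) ≤ Ay f i j := by
  obtain ⟨a, ha, heq⟩ := hf.2.1 _ _ _ (AmbEdge.se i j)
    ⟨show (0:ℤ) ≤ i by omega, h1⟩
    ⟨show (0:ℤ) ≤ i - 1 by omega, show i - 1 ≤ (n:ℤ) by omega⟩
  have hx := congrArg Prod.fst heq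
  have hy := congrArg (fun p : Pt => p.2.1) heq
  simp only [Prod.fst_sub, Prod.smul_fst, smul_eq_mul] at hx
  simp only [Prod.snd_sub, Prod.fst_sub, Prod.smul_snd, Prod.smul_fst, smul_eq_mul] at hy
  unfold Ax Ay Bx By
  constructor
  · nlinarith [hx]
  · nlinarith [hy]

/-- `y(B) ≥ y(A)` along an `ne` edge. -/
lemma ne_y {i : ℤ} (h0 : 0 ≤ i) (h1 : i ≤ (n : ℤ)) (j : ℤ) :
    Ay f i j ≤ By f i j := by
  obtain ⟨h1', h2'⟩ := edge_ne hf h0 h1 j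
  linarith

/-- Single-step vertical monotonicity of `x` on `A`-rows. -/
lemma stepX_vert {i : ℤ} (h0 : 0 ≤ i) (h1 : i + 1 ≤ (n : ℤ)) (j : ℤ) :
    Ax f (i + 1) j ≤ Ax f i j := by
  have hsw := (edge_sw hf (by omega) h1 j).1
  have hne := (edge_ne hf h0 (by omega) j).1
  simp only [add_sub_cancel_right] at hsw
  linarith

/-- Single-step diagonal monotonicity of `x` on `A`-rows. -/
lemma stepX_diag {i : ℤ} (h0 : 0 ≤ i) (h1 : i + 1 ≤ (n : ℤ)) (j : ℤ) :
    Ax f (i + 1) (j + 1) ≤ Ax f i j := by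
  have hse := (edge_se hf (by omega) h1 (j + 1)).1
  have hne := (edge_ne hf h0 (by omega) j).1
  simp only [add_sub_cancel_right] at hse
  linarith

/-- Single-step vertical monotonicity of `y` on `A`-rows. -/
lemma stepY_vert {i : ℤ} (h0 : 0 ≤ i) (h1 : i + 1 ≤ (n : ℤ)) (j : ℤ) :
    Ay f i j ≤ Ay f (i + 1) j := by
  have hsw := (edge_sw hf (by omega) h1 j).2
  have hne := ne_y hf h0 (by omega) j
  simp only [add_sub_cancel_right] at hsw
  linarith

/-- Vertical chain for `x`. -/
lemma chainX_vert {i i' : ℤ} (h0 : 0 ≤ i) (hii : i ≤ i') (hb : i' ≤ (n : ℤ)) (j : ℤ) :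
    Ax f i' j ≤ Ax f i j := by
  refine Int.le_induction (motive := fun t _ => t ≤ (n : ℤ) → Ax f t j ≤ Ax f i j)
    (fun _ => le_refl _) ?_ i' hii hb
  intro t ht ih hb'
  exact le_trans (stepX_vert hf (by omega) hb' j) (ih (by omega))

/-- Diagonal chain for `x`. -/
lemma chainX_diag {i i' : ℤ} (h0 : 0 ≤ i) (hii : i ≤ i') (hb : i' ≤ (n : ℤ)) (j : ℤ) :
    Ax f i' (j + (i' - i)) ≤ Ax f i j := by
  refine Int.le_induction (motive := fun t _ => t ≤ (n : ℤ) → Ax f t (j + (t - i)) ≤ Ax f i j)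
    (fun _ => by simp) ?_ i' hii hb
  intro t ht ih hb'
  have e1 : j + (t + 1 - i) = (j + (t - i)) + 1 := by ring
  rw [e1]
  exact le_trans (stepX_diag hf (by omega) hb' _) (ih (by omega))

/-- Vertical chain for `y`. -/
lemma chainY_vert {i i' : ℤ} (h0 : 0 ≤ i) (hii : i ≤ i') (hb : i' ≤ (n : ℤ)) (j : ℤ) :
    Ay f i j ≤ Ay f i' j := by
  refine Int.le_induction (motive := fun t _ => t ≤ (n : ℤ) → Ay f i j ≤ Ay f t j)
    (fun _ => le_refl _) ?_ i' hii hb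
  intro t ht ih hb'
  exact le_trans (ih (by omega)) (stepY_vert hf (by omega) hb' j)

variable (hn : 1 ≤ n)
include hn

/-- Single-step `j`-monotonicity of `x` on the bottom `B`-row. -/
lemma stepv {j : ℤ} : Bx f 0 j ≤ Bx f 0 (j + 1) := by
  have hse := (edge_se hf (le_refl 1) (by exact_mod_cast hn) (j + 1)).1
  have hsw := (edge_sw hf (le_refl 1) (by exact_mod_cast hn) (j + 1)).1
  simp only [add_sub_cancel_right, sub_self] at hse hsw
  linarith

/-- Single-step `j`-monotonicity of `y` on the bottom `B`-row. -/
lemma stepu {j : ℤ} : By f 0 j ≤ By f 0 (j + 1) := by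
  have hse := (edge_se hf (le_refl 1) (by exact_mod_cast hn) (j + 1)).2
  have hsw := (edge_sw hf (le_refl 1) (by exact_mod_cast hn) (j + 1)).2
  simp only [add_sub_cancel_right, sub_self] at hse hsw
  linarith

/-- Single-step `j`-monotonicity of `y` on the top `A`-row. -/
lemma stepU {j : ℤ} : Ay f n j ≤ Ay f n (j + 1) := by
  have hsw := (edge_sw hf (by exact_mod_cast hn) (le_refl _) j).2
  have hse := (edge_se hf (by exact_mod_cast hn) (le_refl _) (j + 1)).2
  simp only [add_sub_cancel_right] at hse
  linarith

/-- `j`-chain for `x` on the bottom `B`-row. -/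
lemma chainv {a b : ℤ} (hab : a ≤ b) : Bx f 0 a ≤ Bx f 0 b :=
  Int.le_induction (motive := fun t _ => Bx f 0 a ≤ Bx f 0 t) (le_refl _)
    (fun b _ ih => le_trans ih (stepv hf hn)) b hab

/-- `j`-chain for `y` on the bottom `B`-row. -/
lemma chainu {a b : ℤ} (hab : a ≤ b) : By f 0 a ≤ By f 0 b :=
  Int.le_induction (motive := fun t _ => By f 0 a ≤ By f 0 t) (le_refl _)
    (fun b _ ih => le_trans ih (stepu hf hn)) b hab

/-- `j`-chain for `y` on the top `A`-row. -/
lemma chainU {a b : ℤ} (hab : a ≤ b) : Ay f n a ≤ Ay f n b :=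
  Int.le_induction (motive := fun t _ => Ay f n a ≤ Ay f n t) (le_refl _)
    (fun b _ ih => le_trans ih (stepU hf hn)) b hab

end Graph

end MobiusLemma31
namespace MobiusLemma31

/-- `s` lies in the `k`-th block: `kn + 1 ≤ s ≤ kn + n`. -/
def Blk (n : ℕ) (s k : ℤ) : Prop := k * (n : ℤ) + 1 ≤ s ∧ s ≤ k * (n : ℤ) + (n : ℤ)

lemma blk_exists (n : ℕ) (hn : 1 ≤ n) (s : ℤ) : ∃ k, Blk n s k := by
  refine ⟨(s - 1) / (n : ℤ), ?_, ?_⟩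
  · have h := Int.mul_ediv_add_emod (s - 1) (n : ℤ)
    have h2 := Int.emod_nonneg (s - 1) (show (0:ℤ) < (n:ℤ) by exact_mod_cast hn).ne'
    nlinarith [h, h2]
  · have h := Int.mul_ediv_add_emod (s - 1) (n : ℤ)
    have h2 := Int.emod_lt_of_pos (s - 1) (show (0 : ℤ) < n by exact_mod_cast hn)
    nlinarith [h, h2]

lemma blk_unique {n : ℕ} (hn : 1 ≤ n) {s k k' : ℤ} (h : Blk n s k) (h' : Blk n s k') :
    k = k' := by
  have hn' : (0 : ℤ) < n := by exact_mod_cast hn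
  obtain ⟨h1, h2⟩ := h
  obtain ⟨h3, h4⟩ := h'
  have e1 : (k - k') * (n : ℤ) < 1 * n := by nlinarith
  have e2 : (k' - k) * (n : ℤ) < 1 * n := by nlinarith
  have e1' := lt_of_mul_lt_mul_right e1 hn'.le
  have e2' := lt_of_mul_lt_mul_right e2 hn'.le
  omega

lemma blk_shift {n : ℕ} {s k : ℤ} (h : Blk n s k) (t : ℤ) : Blk n (s + t * n) (k + t) := by
  obtain ⟨h1, h2⟩ := h
  constructor <;> nlinarith [h1, h2]

lemma blk_pred {n : ℕ} (hn : 1 ≤ n) {s k : ℤ} (h : Blk n s k) :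
    Blk n (s - 1) k ∨ Blk n (s - 1) (k - 1) := by
  have hn' : (1 : ℤ) ≤ n := by exact_mod_cast hn
  obtain ⟨h1, h2⟩ := h
  rcases lt_or_eq_of_le h1 with hlt | heq
  · left; exact ⟨by omega, by omega⟩
  · right; constructor <;> nlinarith

lemma blk_succ {n : ℕ} (hn : 1 ≤ n) {s k : ℤ} (h : Blk n s k) :
    Blk n (s + 1) k ∨ Blk n (s + 1) (k + 1) := by
  have hn' : (1 : ℤ) ≤ n := by exact_mod_cast hn
  obtain ⟨h1, h2⟩ := h
  rcases lt_or_eq_of_le h2 with hlt | heq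
  · left; exact ⟨by omega, by omega⟩
  · right; constructor <;> nlinarith

/-- The exact shape of the bottom `A`-row (`Ã_{0,s}`). -/
def GA (δ : ℝ) (f : Vtx → Pt) (s k : ℤ) : Prop :=
  Ax f 0 s = ((k : ℝ) - 2) * δ ∧
    ((k : ℝ) - 3) * δ ≤ Ay f 0 s ∧ Ay f 0 s ≤ ((k : ℝ) - 2) * δ

/-- The exact shape of the top `B`-row (`B̃_{n,j}`). -/
def GB (n : ℕ) (δ : ℝ) (f : Vtx → Pt) (j k : ℤ) : Prop :=
  ((k : ℝ) - 4) * δ ≤ Bx f n j ∧ Bx f n j ≤ ((k : ℝ) - 3) * δ ∧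
    By f n j = ((k : ℝ) - 2) * δ

/-- The wrap equation `R_m = T⁻¹ W_{m-n}`. -/
def E4 (n : ℕ) (δ : ℝ) (f : Vtx → Pt) (m : ℤ) : Prop :=
  Ax f 0 m = By f n (m - n) + δ ∧ Ay f 0 m = Bx f n (m - n) + 2 * δ

section Wrappers

variable {n : ℕ} {δ : ℝ} {f : Vtx → Pt} (hδ : 0 < δ) (hn : 1 ≤ n) (hf : IsMobius n δ f)

include hf

lemma pairA {i : ℤ} (h0 : 0 ≤ i) (h1 : i ≤ (n : ℤ)) (j : ℤ) :
    pEquiv δ (f ⟨VK.A, i, j⟩) (f ⟨VK.B, (n : ℤ) - i, j - i + 2 * n⟩) := by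
  refine hf.2.2.2.2.2.1 _ _ ⟨h0, h1⟩
    ⟨show (0:ℤ) ≤ (n : ℤ) - i by omega, show (n : ℤ) - i ≤ (n : ℤ) by omega⟩ ?_
  exact Relation.EqvGen.rel _ _ (Or.inl ⟨rfl, rfl⟩)

lemma pairB {i : ℤ} (h0 : 0 ≤ i) (h1 : i ≤ (n : ℤ)) (j : ℤ) :
    pEquiv δ (f ⟨VK.B, i, j⟩) (f ⟨VK.A, (n : ℤ) - i, j - i + 2 * n⟩) := by
  refine hf.2.2.2.2.2.1 _ _ ⟨h0, h1⟩
    ⟨show (0:ℤ) ≤ (n : ℤ) - i by omega, show (n : ℤ) - i ≤ (n : ℤ) by omega⟩ ?_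
  exact Relation.EqvGen.rel _ _ (Or.inr ⟨rfl, rfl⟩)

/-- `TRel` from `Ã_{i,j}` to its partner `B̃_{i',j'}`. -/
lemma trelAB {i j i' j' : ℤ} (h0 : 0 ≤ i) (h1 : i ≤ (n : ℤ))
    (hi' : i' = (n : ℤ) - i) (hj' : j' = j - i + 2 * n) :
    TRel δ (Ax f i j) (Ay f i j) (Bx f i' j') (By f i' j') := by
  subst hi'; subst hj'
  exact pform (pairA hf h0 h1 j)

/-- `TRel` from `B̃_{i',j'}` back to `Ã_{i,j}` (symmetric version). -/
lemma trelABs {i j i' j' : ℤ} (h0 : 0 ≤ i) (h1 : i ≤ (n : ℤ))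
    (hi' : i' = (n : ℤ) - i) (hj' : j' = j - i + 2 * n) :
    TRel δ (Bx f i' j') (By f i' j') (Ax f i j) (Ay f i j) := by
  subst hi'; subst hj'
  exact pform (Relation.EqvGen.symm _ _ (pairA hf h0 h1 j))

/-- `TRel` from `B̃_{i,j}` to its partner `Ã_{i',j'}`. -/
lemma trelBA {i j i' j' : ℤ} (h0 : 0 ≤ i) (h1 : i ≤ (n : ℤ))
    (hi' : i' = (n : ℤ) - i) (hj' : j' = j - i + 2 * n) :
    TRel δ (Bx f i j) (By f i j) (Ax f i' j') (Ay f i' j') := by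
  subst hi'; subst hj'
  exact pform (pairB hf h0 h1 j)

/-- `TRel` from `Ã_{i',j'}` back to `B̃_{i,j}` (symmetric version). -/
lemma trelBAs {i j i' j' : ℤ} (h0 : 0 ≤ i) (h1 : i ≤ (n : ℤ))
    (hi' : i' = (n : ℤ) - i) (hj' : j' = j - i + 2 * n) :
    TRel δ (Ax f i' j') (Ay f i' j') (Bx f i j) (By f i j) := by
  subst hi'; subst hj'
  exact pform (Relation.EqvGen.symm _ _ (pairB hf h0 h1 j))

include hn

/-- The boundary condition (MH2) gives the exact shape of the bottom `A`-row
on the fundamental strip. -/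
lemma baseGA {s k : ℤ} (h1 : 1 ≤ s) (h3 : s ≤ 3 * (n : ℤ)) (hb : Blk n s k) :
    GA δ f s k := by
  have hn' : (1 : ℤ) ≤ n := by exact_mod_cast hn
  rcases le_or_gt s (n : ℤ) with hc | hc
  · obtain ⟨ξ, hξ1, hξ2, hfeq⟩ := hf.2.2.1 s h1 hc
    have hk : k = 0 := blk_unique hn hb ⟨by omega, by omega⟩
    subst hk
    have e1 : Ax f 0 s = -(2*δ) := by unfold Ax; rw [hfeq]
    have e2 : Ay f 0 s = 2*δ - ξ := by unfold Ay; rw [hfeq]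
    refine ⟨?_, ?_, ?_⟩ <;> simp only [e1, e2] <;> push_cast <;> linarith
  rcases le_or_gt s (2 * (n : ℤ)) with hc2 | hc2
  · obtain ⟨ξ, hξ1, hξ2, hfeq⟩ := hf.2.2.2.1 s (by omega) hc2
    have hk : k = 1 := blk_unique hn hb ⟨by omega, by omega⟩
    subst hk
    have e1 : Ax f 0 s = -δ := by unfold Ax; rw [hfeq]
    have e2 : Ay f 0 s = δ - ξ := by unfold Ay; rw [hfeq]
    refine ⟨?_, ?_, ?_⟩ <;> simp only [e1, e2] <;> push_cast <;> linarith
  · obtain ⟨ξ, hξ1, hξ2, hfeq⟩ := hf.2.2.2.2.1 s (by omega) h3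
    have hk : k = 2 := blk_unique hn hb ⟨by omega, by omega⟩
    subst hk
    have e1 : Ax f 0 s = 0 := by unfold Ax; rw [hfeq]
    have e2 : Ay f 0 s = -ξ := by unfold Ay; rw [hfeq]
    refine ⟨?_, ?_, ?_⟩ <;> simp only [e1, e2] <;> push_cast <;> linarith

include hδ

/-- Type-B wrap pinning: from the exact shape of `R_s` and `R_{s+n}`, pin
`W_s = T R_{s+n}`, giving the shape of `W_s` and the wrap equation `E4 (s+n)`. -/
lemma wrapW_B {s k : ℤ} (hga : GA δ f s k) (hga' : GA δ f (s + n) (k + 1)) :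
    GB n δ f s k ∧ E4 n δ f (s + n) := by
  have hn' : (1 : ℤ) ≤ n := by exact_mod_cast hn
  obtain ⟨hax, hay1, hay2⟩ := hga
  obtain ⟨hax', hay1', hay2'⟩ := hga'
  -- constraints on W_s
  have hne := edge_ne hf (show (0:ℤ) ≤ n by omega) (le_refl _) s
  have hney := ne_y hf (show (0:ℤ) ≤ n by omega) (le_refl _) s
  have hvert := chainX_vert hf (le_refl (0:ℤ)) (show (0:ℤ) ≤ n by omega) (le_refl _) s
  have hverty := chainY_vert hf (le_refl (0:ℤ)) (show (0:ℤ) ≤ n by omega) (le_refl _) s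
  have hwx : Bx f n s ≤ ((k : ℝ) - 2) * δ := by linarith [hne.1]
  have hwy : ((k : ℝ) - 3) * δ ≤ By f n s := by linarith
  -- the pair
  have hpe : TRel δ (Ax f 0 (s + n)) (Ay f 0 (s + n)) (Bx f n s) (By f n s) :=
    trelBAs hf (show (0:ℤ) ≤ n by omega) (le_refl _) (by ring) (by ring)
  have hrx : Ax f 0 (s + n) = ((k : ℝ) - 1) * δ := by rw [hax']; push_cast; ring
  have hry1 : ((k : ℝ) - 2) * δ ≤ Ay f 0 (s + n) := by
    have : (((k : ℤ) + 1 : ℤ) : ℝ) = (k : ℝ) + 1 := by push_cast; ring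
    linarith [hay1']
  have hry2 : Ay f 0 (s + n) ≤ ((k : ℝ) - 1) * δ := by linarith [hay2']
  have hpin := pin1 hδ hrx hry1 hry2 hwx hwy hpe
  obtain ⟨hw1, hw2⟩ := hpin
  refine ⟨⟨by linarith, by linarith, by linarith⟩, ?_, ?_⟩
  · have : s + n - n = s := by ring
    rw [this]; linarith
  · have : s + n - n = s := by ring
    rw [this]; linarith

end Wrappers

end MobiusLemma31
namespace MobiusLemma31

section Steps

variable {n : ℕ} {δ : ℝ} {f : Vtx → Pt} (hδ : 0 < δ) (hn : 1 ≤ n) (hf : IsMobius n δ f)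

include hn hf

private lemma hnz : (1 : ℤ) ≤ (n : ℤ) := by exact_mod_cast hn

/-- `se`-edge at `(1, j)`. -/
lemma se1 (j : ℤ) : Bx f 0 (j - 1) = Ax f 1 j ∧ By f 0 (j - 1) ≤ Ay f 1 j := by
  have h := edge_se hf (le_refl 1) (hnz hn hf) j
  norm_num at h
  exact h

/-- `sw`-edge at `(1, j)`. -/
lemma sw1 (j : ℤ) : Ax f 1 j ≤ Bx f 0 j ∧ By f 0 j = Ay f 1 j := by
  have h := edge_sw hf (le_refl 1) (hnz hn hf) j
  norm_num at h
  exact h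

lemma stepv' (j : ℤ) : Bx f 0 (j - 1) ≤ Bx f 0 j := by
  have h := stepv hf hn (j := j - 1)
  simpa using h

lemma stepu' (j : ℤ) : By f 0 (j - 1) ≤ By f 0 j := by
  have h := stepu hf hn (j := j - 1)
  simpa using h

lemma stepU' (j : ℤ) : Ay f n (j - 1) ≤ Ay f n j := by
  have h := stepU hf hn (j := j - 1)
  simpa using h

include hδ

/-- Transfer along the wrap: the bottom `B`-row is the `T⁻¹`-image of the top
`A`-row, on the `x`-coordinate. -/
lemma transferQ {m : ℤ} (hE : E4 n δ f m) : Bx f 0 m = Ay f n (m - n) + δ := by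
  have h0n : (0 : ℤ) ≤ (n : ℤ) := by have := hnz hn hf; omega
  have hs1 := (edge_ne hf (le_refl 0) h0n m).2
  have hs2 := (edge_ne hf h0n (le_refl _) (m - n)).2
  have hpe : TRel δ (Ax f n (m - n)) (Ay f n (m - n)) (Bx f 0 m) (By f 0 m) :=
    trelAB hf h0n (le_refl _) (by ring) (by ring)
  have hsum : Bx f 0 m + By f 0 m = Ax f n (m - n) + Ay f n (m - n) + 3 * δ := by
    obtain ⟨hE1, hE2⟩ := hE
    unfold Ax Ay Bx By at *
    linarith
  exact (pin7 hδ hsum hpe).1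

/-- Forward step, top row: pin `W_s` (with the borderline `B1` eliminated). -/
lemma stepW_F {s k k1 k1' : ℤ}
    (hga2 : GA δ f (s - 2 * n) (k - 2))
    (hga1 : GA δ f (s - 1) k1) (hk1 : k1 = k ∨ k1 = k - 1)
    (hgb_sn : GB n δ f (s - n) (k - 1))
    (hE41 : E4 n δ f (s - 1))
    (hga1n : GA δ f (s - 1 - n) k1') (hk1' : k1' = k - 1 ∨ k1' = k - 2) :
    GB n δ f s k := by
  have hn' := hnz hn hf
  have h0n : (0 : ℤ) ≤ (n : ℤ) := by omega
  -- x-upper on W_s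
  have c1 : Bx f n s ≤ Ax f n s := (edge_ne hf h0n (le_refl _) s).1
  have c2 : Ax f n s ≤ Ax f 1 s := chainX_vert hf (by omega) hn' (le_refl _) s
  have c3 : Bx f 0 (s - 1) = Ax f 1 s := (se1 hn hf s).1
  have c4 : Bx f 0 (s - 1) ≤ Ax f 0 (s - 1) := (edge_ne hf (le_refl 0) h0n (s - 1)).1
  have hwx : Bx f n s ≤ ((k : ℝ) - 2) * δ := by
    have := hga1.1
    rcases hk1 with h | h <;> subst h <;> push_cast at this <;> linarith
  -- y-lower on W_s
  have d1 : Ay f n s ≤ By f n s := ne_y hf h0n (le_refl _) s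
  have d2 : Ay f n (s - 1) ≤ Ay f n s := stepU' hn hf s
  have d3 : Ay f 0 (s - 1) ≤ Ay f n (s - 1) := chainY_vert hf (le_refl 0) h0n (le_refl _) (s - 1)
  have hwy : ((k : ℝ) - 4) * δ ≤ By f n s := by
    have := hga1.2.1
    rcases hk1 with h | h <;> subst h <;> push_cast at this <;> linarith
  -- the type-A pair and pin3
  have hpe : TRel δ (Ax f 0 (s - 2 * n)) (Ay f 0 (s - 2 * n)) (Bx f n s) (By f n s) :=
    trelAB hf (le_refl 0) h0n (by ring) (by ring)
  have hx0 : Ax f 0 (s - 2 * n) = ((k : ℝ) - 4) * δ := by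
    have := hga2.1; push_cast at this; linarith
  have hy01 : ((k : ℝ) - 5) * δ ≤ Ay f 0 (s - 2 * n) := by
    have := hga2.2.1; push_cast at this; linarith
  have hy02 : Ay f 0 (s - 2 * n) ≤ ((k : ℝ) - 4) * δ := by
    have := hga2.2.2; push_cast at this; linarith
  rcases pin3 hδ hx0 hy01 hy02 hwx hwy hpe with ⟨hw1, hw2⟩ | ⟨hw1, hw2⟩
  · exact ⟨by linarith, by linarith, by linarith⟩
  · -- borderline B1 : eliminate via pin2
    exfalso
    -- x-lower on R_s
    have t1 : Bx f 0 s ≤ Ax f 0 s := (edge_ne hf (le_refl 0) h0n s).1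
    have t2 : Bx f 0 (s - 1) ≤ Bx f 0 s := stepv' hn hf s
    have t3 : Bx f 0 (s - 1) = Ay f n (s - 1 - n) + δ := transferQ hδ hn hf hE41
    have t4 : Ay f 0 (s - 1 - n) ≤ Ay f n (s - 1 - n) :=
      chainY_vert hf (le_refl 0) h0n (le_refl _) (s - 1 - n)
    have hrx : ((k : ℝ) - 4) * δ ≤ Ax f 0 s := by
      have := hga1n.2.1
      rcases hk1' with h | h <;> subst h <;> push_cast at this <;> linarith
    -- y-upper on R_s
    have r1 : Ay f 0 s ≤ By f 0 s := ne_y hf (le_refl 0) h0n s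
    have r2 : By f 0 s = Ay f 1 s := (sw1 hn hf s).2
    have r3 : Ay f 1 s ≤ Ay f n s := chainY_vert hf (by omega) hn' (le_refl _) s
    have hry : Ay f 0 s ≤ ((k : ℝ) - 4) * δ := by
      have := hga2.2.2; push_cast at this; linarith
    have hpe2 : TRel δ (Bx f n (s - n)) (By f n (s - n)) (Ax f 0 s) (Ay f 0 s) :=
      trelBA hf h0n (le_refl _) (by ring) (by ring)
    have g1 : ((k : ℝ) - 5) * δ ≤ Bx f n (s - n) := by
      have := hgb_sn.1; push_cast at this; linarith
    have g2 : Bx f n (s - n) ≤ ((k : ℝ) - 4) * δ := by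
      have := hgb_sn.2.1; push_cast at this; linarith
    have g3 : By f n (s - n) = ((k : ℝ) - 3) * δ := by
      have := hgb_sn.2.2; push_cast at this; linarith
    exact pin2 hδ g1 g2 g3 hrx hry hpe2

/-- Forward step, bottom row: pin `R_s` (with the borderline `B2` eliminated). -/
lemma stepR_F {s k k1' : ℤ}
    (hgb_sn : GB n δ f (s - n) (k - 1))
    (hga_sn : GA δ f (s - n) (k - 1))
    (hgbs : GB n δ f s k)
    (hE41 : E4 n δ f (s - 1))
    (hga1n : GA δ f (s - 1 - n) k1') (hk1' : k1' = k - 1 ∨ k1' = k - 2) :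
    GA δ f s k ∧ E4 n δ f s := by
  have hn' := hnz hn hf
  have h0n : (0 : ℤ) ≤ (n : ℤ) := by omega
  -- x-lower on R_s
  have t1 : Bx f 0 s ≤ Ax f 0 s := (edge_ne hf (le_refl 0) h0n s).1
  have t2 : Bx f 0 (s - 1) ≤ Bx f 0 s := stepv' hn hf s
  have t3 : Bx f 0 (s - 1) = Ay f n (s - 1 - n) + δ := transferQ hδ hn hf hE41
  have t4 : Ay f 0 (s - 1 - n) ≤ Ay f n (s - 1 - n) :=
    chainY_vert hf (le_refl 0) h0n (le_refl _) (s - 1 - n)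
  have hrx : ((k : ℝ) - 4) * δ ≤ Ax f 0 s := by
    have := hga1n.2.1
    rcases hk1' with h | h <;> subst h <;> push_cast at this <;> linarith
  -- y-upper on R_s
  have r1 : Ay f 0 s ≤ By f 0 s := ne_y hf (le_refl 0) h0n s
  have r2 : By f 0 s = Ay f 1 s := (sw1 hn hf s).2
  have r3 : Ay f 1 s ≤ Ay f n s := chainY_vert hf (by omega) hn' (le_refl _) s
  have r4 : Ay f n s ≤ By f n s := ne_y hf h0n (le_refl _) s
  have hry : Ay f 0 s ≤ ((k : ℝ) - 2) * δ := by
    have := hgbs.2.2; linarith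
  -- pair and pin4
  have hpe : TRel δ (Bx f n (s - n)) (By f n (s - n)) (Ax f 0 s) (Ay f 0 s) :=
    trelBA hf h0n (le_refl _) (by ring) (by ring)
  have g1 : ((k : ℝ) - 5) * δ ≤ Bx f n (s - n) := by
    have := hgb_sn.1; push_cast at this; linarith
  have g2 : Bx f n (s - n) ≤ ((k : ℝ) - 4) * δ := by
    have := hgb_sn.2.1; push_cast at this; linarith
  have g3 : By f n (s - n) = ((k : ℝ) - 3) * δ := by
    have := hgb_sn.2.2; push_cast at this; linarith
  rcases pin4 hδ g1 g2 g3 hrx hry hpe with ⟨hr1, hr2⟩ | ⟨hr1, hr2⟩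
  · exact ⟨⟨by linarith, by linarith, by linarith⟩, hr1, hr2⟩
  · -- borderline B2 : eliminate via pin5
    exfalso
    -- x-upper on W_{s+n}
    have c1 : Bx f n (s + n) ≤ Ax f n (s + n) := (edge_ne hf h0n (le_refl _) (s + n)).1
    have c2 : Ax f n ((s + 1) + ((n : ℤ) - 1)) ≤ Ax f 1 (s + 1) :=
      chainX_diag hf (by omega) hn' (le_refl _) (s + 1)
    have e2 : (s + 1) + ((n : ℤ) - 1) = s + n := by ring
    rw [e2] at c2
    have c3 : Bx f 0 s = Ax f 1 (s + 1) := by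
      have h := (se1 hn hf (s + 1)).1
      simpa using h
    have hwx : Bx f n (s + n) ≤ ((k : ℝ) - 4) * δ := by
      have h1 : Ax f 0 s = Bx f n (s - n) := hr1
      have := hgb_sn.2.1; push_cast at this
      linarith
    -- y-lower on W_{s+n}
    have d1 : Ay f n (s + n) ≤ By f n (s + n) := ne_y hf h0n (le_refl _) (s + n)
    have d2 : Ay f n s ≤ Ay f n (s + n) := chainU hf hn (by omega)
    have d3 : Ay f 0 s ≤ Ay f n s := chainY_vert hf (le_refl 0) h0n (le_refl _) s
    have hwy : ((k : ℝ) - 3) * δ ≤ By f n (s + n) := by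
      have h2 : Ay f 0 s = By f n (s - n) := hr2
      have := hgb_sn.2.2; push_cast at this
      linarith
    -- pair (R_{s-n}, W_{s+n}) and pin5
    have hpe2 : TRel δ (Ax f 0 (s - n)) (Ay f 0 (s - n)) (Bx f n (s + n)) (By f n (s + n)) :=
      trelAB hf (le_refl 0) h0n (by ring) (by ring)
    have g1' : Ax f 0 (s - n) = ((k : ℝ) - 3) * δ := by
      have := hga_sn.1; push_cast at this; linarith
    have g2' : ((k : ℝ) - 4) * δ ≤ Ay f 0 (s - n) := by
      have := hga_sn.2.1; push_cast at this; linarith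
    have g3' : Ay f 0 (s - n) ≤ ((k : ℝ) - 3) * δ := by
      have := hga_sn.2.2; push_cast at this; linarith
    exact pin5 hδ g1' g2' g3' hwx hwy hpe2

/-- Backward step, bottom row: pin `R_s`. -/
lemma stepR_B {s k k2 : ℤ}
    (hE2 : E4 n δ f (s + 2 * n)) (hE3 : E4 n δ f (s + 3 * n)) (hE1 : E4 n δ f (s + n + 1))
    (hga3 : GA δ f (s + 3 * n) (k + 3))
    (hga2 : GA δ f (s + 2 * n) (k + 2))
    (hga1 : GA δ f (s + n + 1) k2) (hk2 : k2 = k + 1 ∨ k2 = k + 2) :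
    GA δ f s k := by
  have hn' := hnz hn hf
  have h0n : (0 : ℤ) ≤ (n : ℤ) := by omega
  -- values of W_{s+2n}
  have e3a : Ax f 0 (s + 3 * n) = By f n (s + 2 * n) + δ := by
    have h := hE3.1
    have e : s + 3 * n - n = s + 2 * n := by ring
    rwa [e] at h
  have e3b : Ay f 0 (s + 3 * n) = Bx f n (s + 2 * n) + 2 * δ := by
    have h := hE3.2
    have e : s + 3 * n - n = s + 2 * n := by ring
    rwa [e] at h
  have hwy : By f n (s + 2 * n) = (k : ℝ) * δ := by
    have := hga3.1; push_cast at this; linarith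
  have hwx : Bx f n (s + 2 * n) = Ay f 0 (s + 3 * n) - 2 * δ := by linarith
  -- bounds for a and b
  have ha1 : (k : ℝ) * δ ≤ Ay f 0 (s + 3 * n) := by
    have := hga3.2.1; push_cast at this; linarith
  have ha2 : Ay f 0 (s + 3 * n) ≤ ((k : ℝ) + 1) * δ := by
    have := hga3.2.2; push_cast at this; linarith
  have hb1 : ((k : ℝ) - 1) * δ ≤ Ay f 0 (s + 2 * n) := by
    have := hga2.2.1; push_cast at this; linarith
  have hb2 : Ay f 0 (s + 2 * n) ≤ (k : ℝ) * δ := by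
    have := hga2.2.2; push_cast at this; linarith
  -- x-lower on R_s
  have t1 : Bx f 0 s ≤ Ax f 0 s := (edge_ne hf (le_refl 0) h0n s).1
  have t2 : Bx f 0 s = Ax f 1 (s + 1) := by
    have h := (se1 hn hf (s + 1)).1
    simpa using h
  have t3 : Ax f n ((s + 1) + ((n : ℤ) - 1)) ≤ Ax f 1 (s + 1) :=
    chainX_diag hf (by omega) hn' (le_refl _) (s + 1)
  have e1 : (s + 1) + ((n : ℤ) - 1) = s + n := by ring
  rw [e1] at t3
  have t4 : Bx f n (s + n) ≤ Ax f n (s + n) := (edge_ne hf h0n (le_refl _) (s + n)).1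
  have t5 : Bx f n (s + n) = Ay f 0 (s + 2 * n) - 2 * δ := by
    have h := hE2.2
    have e : s + 2 * n - n = s + n := by ring
    rw [e] at h
    linarith
  have hrx : Ay f 0 (s + 2 * n) - 2 * δ ≤ Ax f 0 s := by linarith
  -- y-upper on R_s
  have r1 : Ay f 0 s ≤ By f 0 s := ne_y hf (le_refl 0) h0n s
  have r2 : By f 0 s ≤ By f 0 (s + 1) := stepu hf hn
  have r3 : By f 0 (s + 1) = Ay f 1 (s + 1) := (sw1 hn hf (s + 1)).2
  have r4 : Ay f 1 (s + 1) ≤ Ay f n (s + 1) := chainY_vert hf (by omega) hn' (le_refl _) (s + 1)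
  have r5 : Ay f n (s + 1) ≤ By f n (s + 1) := ne_y hf h0n (le_refl _) (s + 1)
  have r6 : By f n (s + 1) = Ax f 0 (s + n + 1) - δ := by
    have h := hE1.1
    have e : s + n + 1 - n = s + 1 := by ring
    rw [e] at h
    linarith
  have hry : Ay f 0 s ≤ ((k : ℝ) - 1) * δ := by
    have := hga1.1
    rcases hk2 with h | h <;> subst h <;> push_cast at this <;> linarith
  -- the pair and pin6
  have hpe : TRel δ (Bx f n (s + 2 * n)) (By f n (s + 2 * n)) (Ax f 0 s) (Ay f 0 s) :=
    trelABs hf (le_refl 0) h0n (by ring) (by ring)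
  have hpin := pin6 hδ ha1 ha2 hb1 hb2 hwx hwy hrx hry hpe
  obtain ⟨hp1, hp2⟩ := hpin
  refine ⟨by rw [hp1, hwy]; ring, ?_, ?_⟩
  · rw [hp2, hwx]; linarith
  · rw [hp2, hwx]; linarith

end Steps

end MobiusLemma31
namespace MobiusLemma31

/-- The induction invariant: exact shapes of the two boundary rows and the wrap
equations on the window `[lo, hi]`. -/
def Inv (n : ℕ) (δ : ℝ) (f : Vtx → Pt) (lo hi : ℤ) : Prop :=
  (∀ s k, lo ≤ s → s ≤ hi → Blk n s k → GA δ f s k) ∧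
  (∀ s k, lo ≤ s → s ≤ hi → Blk n s k → GB n δ f s k) ∧
  (∀ m, lo + n ≤ m → m ≤ hi → E4 n δ f m)

section Induction

variable {n : ℕ} {δ : ℝ} {f : Vtx → Pt} (hδ : 0 < δ) (hn : 1 ≤ n) (hf : IsMobius n δ f)

include hδ hn hf

lemma inv_base : Inv n δ f 1 (3 * n) := by
  have hn' : (1 : ℤ) ≤ (n : ℤ) := by exact_mod_cast hn
  have hGA : ∀ s k, (1 : ℤ) ≤ s → s ≤ 3 * n → Blk n s k → GA δ f s k := fun s k h1 h2 hb =>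
    baseGA hn hf h1 h2 hb
  -- GB and E4 for the first two thirds via the type-B wrap
  have hW : ∀ s k, (1 : ℤ) ≤ s → s ≤ 2 * n → Blk n s k →
      GB n δ f s k ∧ E4 n δ f (s + n) := by
    intro s k h1 h2 hb
    exact wrapW_B hδ hn hf (hGA s k h1 (by omega) hb)
      (hGA (s + n) (k + 1) (by omega) (by omega) (by simpa using blk_shift hb 1))
  -- GB for the last third via the forward pinning
  have hW2 : ∀ s k, 2 * (n : ℤ) + 1 ≤ s → s ≤ 3 * n → Blk n s k → GB n δ f s k := by
    intro s k h1 h2 hb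
    have hb2 : Blk n (s - 2 * n) (k - 2) := by simpa [sub_eq_add_neg] using blk_shift hb (-2)
    have hbn : Blk n (s - n) (k - 1) := by simpa [sub_eq_add_neg] using blk_shift hb (-1)
    obtain ⟨k1, hbk1, hk1⟩ : ∃ k1, Blk n (s - 1) k1 ∧ (k1 = k ∨ k1 = k - 1) := by
      rcases blk_pred hn hb with h | h
      · exact ⟨k, h, Or.inl rfl⟩
      · exact ⟨k - 1, h, Or.inr rfl⟩
    have hbk1' : Blk n (s - 1 - n) (k1 - 1) := by simpa [sub_eq_add_neg] using blk_shift hbk1 (-1)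
    refine stepW_F hδ hn hf (hGA _ _ (by omega) (by omega) hb2)
      (hGA _ _ (by omega) (by omega) hbk1) hk1
      ((hW _ _ (by omega) (by omega) hbn).1)
      ?_ (hGA _ _ (by omega) (by omega) hbk1') (by omega)
    · -- E4 (s - 1)
      have := (hW (s - 1 - n) (k1 - 1) (by omega) (by omega) hbk1').2
      simpa using this
  refine ⟨hGA, ?_, ?_⟩
  · intro s k h1 h2 hb
    rcases le_or_gt s (2 * (n : ℤ)) with hc | hc
    · exact (hW s k h1 hc hb).1
    · exact hW2 s k (by omega) h2 hb
  · intro m h1 h2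
    obtain ⟨k, hbk⟩ := blk_exists n hn (m - n)
    have := (hW (m - n) k (by omega) (by omega) hbk).2
    simpa using this

lemma inv_forward {lo hi : ℤ} (hlo : lo ≤ 1) (hhi : 3 * (n : ℤ) ≤ hi)
    (hI : Inv n δ f lo hi) : Inv n δ f lo (hi + 1) := by
  have hn' : (1 : ℤ) ≤ (n : ℤ) := by exact_mod_cast hn
  obtain ⟨hGA, hGB, hE⟩ := hI
  set s := hi + 1 with hs
  obtain ⟨k₀, hbk₀⟩ := blk_exists n hn s
  -- shape bookkeeping around s
  have hb2 : Blk n (s - 2 * n) (k₀ - 2) := by simpa [sub_eq_add_neg] using blk_shift hbk₀ (-2)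
  have hbn : Blk n (s - n) (k₀ - 1) := by simpa [sub_eq_add_neg] using blk_shift hbk₀ (-1)
  obtain ⟨k1, hbk1, hk1⟩ : ∃ k1, Blk n (s - 1) k1 ∧ (k1 = k₀ ∨ k1 = k₀ - 1) := by
    rcases blk_pred hn hbk₀ with h | h
    · exact ⟨k₀, h, Or.inl rfl⟩
    · exact ⟨k₀ - 1, h, Or.inr rfl⟩
  have hbk1' : Blk n (s - 1 - n) (k1 - 1) := by simpa [sub_eq_add_neg] using blk_shift hbk1 (-1)
  have hE41 : E4 n δ f (s - 1) := hE (s - 1) (by omega) (by omega)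
  have hGBs : GB n δ f s k₀ :=
    stepW_F hδ hn hf (hGA _ _ (by omega) (by omega) hb2)
      (hGA _ _ (by omega) (by omega) hbk1) hk1
      (hGB _ _ (by omega) (by omega) hbn) hE41
      (hGA _ _ (by omega) (by omega) hbk1') (by omega)
  have hGAs : GA δ f s k₀ ∧ E4 n δ f s :=
    stepR_F hδ hn hf (hGB _ _ (by omega) (by omega) hbn)
      (hGA _ _ (by omega) (by omega) hbn) hGBs hE41
      (hGA _ _ (by omega) (by omega) hbk1') (by omega)
  refine ⟨?_, ?_, ?_⟩
  · intro t k h1 h2 hb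
    rcases lt_or_eq_of_le h2 with h | h
    · exact hGA t k h1 (by omega) hb
    · have : t = s := by omega
      subst this
      have : k = k₀ := blk_unique hn hb hbk₀
      subst this
      exact hGAs.1
  · intro t k h1 h2 hb
    rcases lt_or_eq_of_le h2 with h | h
    · exact hGB t k h1 (by omega) hb
    · have : t = s := by omega
      subst this
      have : k = k₀ := blk_unique hn hb hbk₀
      subst this
      exact hGBs
  · intro m h1 h2
    rcases lt_or_eq_of_le h2 with h | h
    · exact hE m h1 (by omega)
    · have : m = s := by omega
      subst this
      exact hGAs.2

lemma inv_backward {lo hi : ℤ} (hlo : lo ≤ 1) (hhi : 3 * (n : ℤ) ≤ hi)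
    (hI : Inv n δ f lo hi) : Inv n δ f (lo - 1) hi := by
  have hn' : (1 : ℤ) ≤ (n : ℤ) := by exact_mod_cast hn
  obtain ⟨hGA, hGB, hE⟩ := hI
  set s := lo - 1 with hs
  obtain ⟨k₀, hbk₀⟩ := blk_exists n hn s
  have hb3 : Blk n (s + 3 * n) (k₀ + 3) := by simpa using blk_shift hbk₀ 3
  have hb2 : Blk n (s + 2 * n) (k₀ + 2) := by simpa using blk_shift hbk₀ 2
  have hb1 : Blk n (s + n) (k₀ + 1) := by simpa using blk_shift hbk₀ 1
  obtain ⟨k2, hbk2, hk2⟩ : ∃ k2, Blk n (s + n + 1) k2 ∧ (k2 = k₀ + 1 ∨ k2 = k₀ + 2) := by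
    rcases blk_succ hn hb1 with h | h
    · exact ⟨k₀ + 1, h, Or.inl rfl⟩
    · have e : k₀ + 1 + 1 = k₀ + 2 := by ring
      rw [e] at h
      exact ⟨k₀ + 2, h, Or.inr rfl⟩
  have hGAs : GA δ f s k₀ :=
    stepR_B hδ hn hf (hE _ (by omega) (by omega)) (hE _ (by omega) (by omega))
      (hE _ (by omega) (by omega)) (hGA _ _ (by omega) (by omega) hb3)
      (hGA _ _ (by omega) (by omega) hb2)
      (hGA _ _ (by omega) (by omega) hbk2) hk2
  have hGBs : GB n δ f s k₀ ∧ E4 n δ f (s + n) :=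
    wrapW_B hδ hn hf hGAs (hGA _ _ (by omega) (by omega) hb1)
  refine ⟨?_, ?_, ?_⟩
  · intro t k h1 h2 hb
    rcases lt_or_eq_of_le h1 with h | h
    · exact hGA t k (by omega) h2 hb
    · have : t = s := by omega
      subst this
      have : k = k₀ := blk_unique hn hb hbk₀
      subst this
      exact hGAs
  · intro t k h1 h2 hb
    rcases lt_or_eq_of_le h1 with h | h
    · exact hGB t k (by omega) h2 hb
    · have : t = s := by omega
      subst this
      have : k = k₀ := blk_unique hn hb hbk₀
      subst this
      exact hGBs.1
  · intro m h1 h2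
    rcases lt_or_eq_of_le h1 with h | h
    · exact hE m (by omega) h2
    · have : m = s + n := by omega
      subst this
      exact hGBs.2

lemma inv_all (d : ℕ) : Inv n δ f (1 - d) (3 * n + d) := by
  induction d with
  | zero => simpa using inv_base hδ hn hf
  | succ d ih =>
      have h1 := inv_forward hδ hn hf (by push_cast; omega) (by push_cast; omega) ih
      have h2 := inv_backward hδ hn hf (by push_cast; omega) (by push_cast; omega) h1
      have e1 : 1 - ((d : ℤ) + 1) = 1 - (d : ℤ) - 1 := by ring
      have e2 : 3 * (n : ℤ) + ((d : ℤ) + 1) = 3 * (n : ℤ) + (d : ℤ) + 1 := by ring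
      push_cast
      rw [e1, e2]
      exact h2

/-- The global shape of the two boundary rows, for every block. -/
lemma globalGAGB (s k : ℤ) (hb : Blk n s k) : GA δ f s k ∧ GB n δ f s k := by
  obtain ⟨hGA, hGB, _⟩ := inv_all hδ hn hf (s.natAbs + 3 * n + 1)
  refine ⟨hGA s k ?_ ?_ hb, hGB s k ?_ ?_ hb⟩ <;> omega

end Induction

end MobiusLemma31
namespace MobiusLemma31

section Assembly

variable {n : ℕ} {δ : ℝ} {f : Vtx → Pt} (hδ : 0 < δ) (hn : 1 ≤ n) (hf : IsMobius n δ f)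

include hδ hn hf

/-- `x`-bounds for any `A`-vertex. -/
lemma boundsAx {i j κ : ℤ} (hi0 : 0 ≤ i) (hin : i ≤ (n : ℤ)) (hbji : Blk n (j - i) κ) :
    ((κ : ℝ) - 3) * δ ≤ Ax f i j ∧ Ax f i j ≤ ((κ : ℝ) - 2) * δ := by
  have hGAji := (globalGAGB hδ hn hf (j - i) κ hbji).1
  have hGBt := (globalGAGB hδ hn hf (j - i + n) (κ + 1) (by simpa using blk_shift hbji 1)).2
  constructor
  · -- lower: via the diagonal chain up to the top row and `GB`
    have c1 : Ax f n (j + ((n : ℤ) - i)) ≤ Ax f i j := chainX_diag hf hi0 hin (le_refl _) j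
    have c2 : Bx f n (j + ((n : ℤ) - i)) ≤ Ax f n (j + ((n : ℤ) - i)) :=
      (edge_ne hf (by omega) (le_refl _) _).1
    have e : j + ((n : ℤ) - i) = j - i + n := by ring
    rw [e] at c1 c2
    have := hGBt.1
    push_cast at this
    linarith
  · -- upper: via the diagonal chain down to the bottom row and `GA`
    have c1 : Ax f i ((j - i) + (i - 0)) ≤ Ax f 0 (j - i) :=
      chainX_diag hf (le_refl 0) hi0 hin (j - i)
    have e : (j - i) + (i - 0) = j := by ring
    rw [e] at c1
    linarith [hGAji.1]

/-- `y`-bounds for any `A`-vertex. -/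
lemma boundsAy {i j k : ℤ} (hi0 : 0 ≤ i) (hin : i ≤ (n : ℤ)) (hbj : Blk n j k) :
    ((k : ℝ) - 3) * δ ≤ Ay f i j ∧ Ay f i j ≤ ((k : ℝ) - 2) * δ := by
  have hGAj := (globalGAGB hδ hn hf j k hbj).1
  have hGBj := (globalGAGB hδ hn hf j k hbj).2
  constructor
  · have c1 : Ay f 0 j ≤ Ay f i j := chainY_vert hf (le_refl 0) hi0 hin j
    linarith [hGAj.2.1]
  · have c1 : Ay f i j ≤ Ay f n j := chainY_vert hf hi0 hin (le_refl _) j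
    have c2 : Ay f n j ≤ By f n j := ne_y hf (by omega) (le_refl _) j
    linarith [hGBj.2.2]

/-- Equalities expressing a non-top `B`-vertex through `A`-vertices. -/
lemma bEq {i : ℤ} (hi0 : 0 ≤ i) (hi1 : i + 1 ≤ (n : ℤ)) (j : ℤ) :
    Bx f i j = Ax f (i + 1) (j + 1) ∧ By f i j = Ay f (i + 1) j := by
  have h1 := (edge_se hf (by omega) hi1 (j + 1)).1
  have h2 := (edge_sw hf (by omega) hi1 j).2
  simp only [add_sub_cancel_right] at h1 h2
  exact ⟨h1, h2⟩

end Assembly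

end MobiusLemma31

open MobiusLemma31

/-- **Lemma 3.1**: let `Ã_{i,j}, B̃_{i,j}` be vertices of `Γ̃_n` and write
`j = kn + r` with `1 ≤ r ≤ n`.  Then every `h̃ ∈ MÖBIUS(τ̃_n, δ)` maps
`Ã_{i,j}, B̃_{i,j}` into `D_δ^{(2k-4)}` if `r > i`, and into `D_δ^{(2k-5)}` if
`r ≤ i`. -/
theorem mobius_vertex_region (n : ℕ) (δ : ℕ) (hδ : 0 < δ)
    (f : Vtx → Pt) (hf : IsMobius n (δ : ℝ) f)
    (i j k r : ℤ) (hi0 : 0 ≤ i) (hin : i ≤ (n : ℤ))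
    (hj : j = k * (n : ℤ) + r) (hr1 : 1 ≤ r) (hrn : r ≤ (n : ℤ)) :
    (i < r →
      Dreg (δ : ℝ) (2 * k - 4) (f ⟨VK.A, i, j⟩) ∧
      Dreg (δ : ℝ) (2 * k - 4) (f ⟨VK.B, i, j⟩)) ∧
    (r ≤ i →
      Dreg (δ : ℝ) (2 * k - 5) (f ⟨VK.A, i, j⟩) ∧
      Dreg (δ : ℝ) (2 * k - 5) (f ⟨VK.B, i, j⟩)) := by
  have hn : 1 ≤ n := by omega
  have hδ' : (0 : ℝ) < (δ : ℝ) := by exact_mod_cast hδ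
  have hbj : Blk n j k := ⟨by rw [hj]; linarith, by rw [hj]; linarith⟩
  have hpA : planeB (f ⟨VK.A, i, j⟩) := hf.1 _ ⟨hi0, hin⟩
  have hpB : planeB (f ⟨VK.B, i, j⟩) := hf.1 _ ⟨hi0, hin⟩
  have hyA := boundsAy hδ' hn hf hi0 hin hbj
  constructor
  · -- case i < r
    intro hir
    have hi1 : i + 1 ≤ (n : ℤ) := by omega
    have hbji : Blk n (j - i) k := ⟨by rw [hj]; linarith, by rw [hj]; linarith⟩
    have hxA := boundsAx hδ' hn hf hi0 hin hbji
    have hbe := bEq hδ' hn hf hi0 hi1 j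
    have hbji' : Blk n ((j + 1) - (i + 1)) k := by
      have e : (j + 1) - (i + 1) = j - i := by ring
      rw [e]; exact hbji
    have hxB := boundsAx hδ' hn hf (by omega) hi1 hbji'
    have hyB := boundsAy hδ' hn hf (by omega) hi1 hbj
    constructor
    · refine ⟨hpA, k - 2, Or.inl ⟨by ring, ?_, ?_, ?_, ?_⟩⟩
      · have h := hxA.1; simp only [Ax, Ay, Bx, By] at h; push_cast; linarith
      · have h := hxA.2; simp only [Ax, Ay, Bx, By] at h; push_cast; linarith
      · have h := hyA.1; simp only [Ax, Ay, Bx, By] at h; push_cast; linarith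
      · have h := hyA.2; simp only [Ax, Ay, Bx, By] at h; push_cast; linarith
    · refine ⟨hpB, k - 2, Or.inl ⟨by ring, ?_, ?_, ?_, ?_⟩⟩
      · have h := hxB.1; have e := hbe.1; simp only [Ax, Ay, Bx, By] at h e; push_cast; linarith
      · have h := hxB.2; have e := hbe.1; simp only [Ax, Ay, Bx, By] at h e; push_cast; linarith
      · have h := hyB.1; have e := hbe.2; simp only [Ax, Ay, Bx, By] at h e; push_cast; linarith
      · have h := hyB.2; have e := hbe.2; simp only [Ax, Ay, Bx, By] at h e; push_cast; linarith
  · -- case r ≤ i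
    intro hir
    have hbji : Blk n (j - i) (k - 1) := by
      have e : (k - 1) * (n : ℤ) = k * n - n := by ring
      exact ⟨by rw [hj]; linarith, by rw [hj]; linarith⟩
    have hxA := boundsAx hδ' hn hf hi0 hin hbji
    constructor
    · refine ⟨hpA, k - 3, Or.inr ⟨by ring, ?_, ?_, ?_, ?_⟩⟩
      · have h := hxA.1; simp only [Ax, Ay, Bx, By] at h; push_cast at *; linarith
      · have h := hxA.2; simp only [Ax, Ay, Bx, By] at h; push_cast at *; linarith
      · have h := hyA.1; simp only [Ax, Ay, Bx, By] at h; push_cast at *; linarith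
      · have h := hyA.2; simp only [Ax, Ay, Bx, By] at h; push_cast at *; linarith
    · rcases lt_or_eq_of_le hin with hlt | heq
      · -- i + 1 ≤ n : use the A-vertex bounds at (i+1, j+1) and (i+1, j)
        have hi1 : i + 1 ≤ (n : ℤ) := by omega
        have hbe := bEq hδ' hn hf hi0 hi1 j
        have hbji' : Blk n ((j + 1) - (i + 1)) (k - 1) := by
          have e : (j + 1) - (i + 1) = j - i := by ring
          rw [e]; exact hbji
        have hxB := boundsAx hδ' hn hf (by omega) hi1 hbji'
        have hyB := boundsAy hδ' hn hf (by omega) hi1 hbj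
        refine ⟨hpB, k - 3, Or.inr ⟨by ring, ?_, ?_, ?_, ?_⟩⟩
        · have h := hxB.1; have e := hbe.1; simp only [Ax, Ay, Bx, By] at h e; push_cast at *; linarith
        · have h := hxB.2; have e := hbe.1; simp only [Ax, Ay, Bx, By] at h e; push_cast at *; linarith
        · have h := hyB.1; have e := hbe.2; simp only [Ax, Ay, Bx, By] at h e; push_cast at *; linarith
        · have h := hyB.2; have e := hbe.2; simp only [Ax, Ay, Bx, By] at h e; push_cast at *; linarith
      · -- i = n : the top `B`-row, use `GB`
        subst heq
        have hGB := (globalGAGB hδ' hn hf j k hbj).2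
        refine ⟨hpB, k - 3, Or.inr ⟨by ring, ?_, ?_, ?_, ?_⟩⟩
        · have h := hGB.1; simp only [Ax, Ay, Bx, By] at h; push_cast at *; linarith
        · have h := hGB.2.1; simp only [Ax, Ay, Bx, By] at h; push_cast at *; linarith
        · have h := hGB.2.2; simp only [Ax, Ay, Bx, By] at h; push_cast at *; linarith
        · have h := hGB.2.2; simp only [Ax, Ay, Bx, By] at h; push_cast at *; linarith
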